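/- Let R be a commutative Noetherian ring and I = (f_0, …, f_m) ⊆ R an ideal of grade at least 2 with free presentation R^p →^M R^{m+1} →^f R, where f = (f_0, …, f_m). Then the image of the transpose map M^t : (R^{m+1})^* → (R^p)^* has rank m, i.e., the kernel of M^t is a rank-one free module generated by the vector (f_0, …, f_m). -/

import Mathlib

open Pointwise Matrix

/-- Let `R` be a commutative Noetherian ring and `I = (f₀, …, f_m)` an ideal of
grade at least 2 with a free presentation `R^p →^M R^{m+1} →^f R` (exactness in the middle:
the image of `M` is exactly the syzygy module of `f`).  Then the kernel of the transpose map
`M^t : (R^{m+1})^* → (R^p)^*` is the rank-one free module generated by the vector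
`(f₀, …, f_m)`; in particular the image of `M^t` has rank `m`. -/
theorem kernel_of_transpose_eq_span_of_grade_ge_two
    (R : Type*) [CommRing R] [IsNoetherianRing R] (m p : ℕ)
    (M : Matrix (Fin (m + 1)) (Fin p) R) (f : Fin (m + 1) → R)
    (hexact : LinearMap.range M.mulVecLin =
      LinearMap.ker (Matrix.mulVecLin (Matrix.of (fun (_ : Fin 1) j => f j))))
    (hgrade : ∃ x y : R, x ∈ Ideal.span (Set.range f) ∧ y ∈ Ideal.span (Set.range f) ∧
      RingTheory.Sequence.IsRegular R [x, y]) :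
    LinearMap.ker M.transpose.mulVecLin = Submodule.span R {f} := by
  obtain ⟨x, y, hx, hy, hreg⟩ := hgrade
  -- extract regularity facts
  rw [RingTheory.Sequence.isRegular_cons_iff] at hreg
  obtain ⟨hxreg, hreg2⟩ := hreg
  rw [RingTheory.Sequence.isRegular_cons_iff] at hreg2
  have hyreg : IsSMulRegular (QuotSMulTop x R) y := hreg2.1
  -- f kills columns of M
  have hfM : ∀ u : Fin p → R, f ⬝ᵥ (M *ᵥ u) = 0 := by
    intro u
    have : M.mulVecLin u ∈ LinearMap.ker
        (Matrix.mulVecLin (Matrix.of (fun (_ : Fin 1) j => f j))) := by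
      rw [← hexact]; exact ⟨u, rfl⟩
    have := congrFun (LinearMap.mem_ker.mp this) 0
    simpa [Matrix.mulVec, dotProduct] using this
  apply le_antisymm
  · -- forward inclusion
    intro v hv
    have hv' : ∀ w : Fin (m + 1) → R, f ⬝ᵥ w = 0 → v ⬝ᵥ w = 0 := by
      intro w hw
      have : w ∈ LinearMap.range M.mulVecLin := by
        rw [hexact, LinearMap.mem_ker]
        funext i
        have : i = 0 := Subsingleton.elim _ _
        subst this
        simpa [Matrix.mulVecLin, Matrix.mulVec, dotProduct] using hw
      obtain ⟨u, rfl⟩ := this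
      have hv0 : Mᵀ *ᵥ v = 0 := hv
      calc v ⬝ᵥ (M.mulVecLin u) = v ⬝ᵥ (M *ᵥ u) := rfl
        _ = (v ᵥ* M) ⬝ᵥ u := dotProduct_mulVec v M u
        _ = (Mᵀ *ᵥ v) ⬝ᵥ u := by rw [Matrix.mulVec_transpose]
        _ = 0 := by rw [hv0]; exact zero_dotProduct u
    have key : ∀ a b : Fin (m + 1) → R,
        (f ⬝ᵥ a) * (v ⬝ᵥ b) = (f ⬝ᵥ b) * (v ⬝ᵥ a) := by
      intro a b
      have h0 : f ⬝ᵥ ((f ⬝ᵥ a) • b - (f ⬝ᵥ b) • a) = 0 := by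
        simp [dotProduct_sub, dotProduct_smul, smul_eq_mul, mul_comm]
      have := hv' _ h0
      simp only [dotProduct_sub, dotProduct_smul, smul_eq_mul,
        sub_eq_zero] at this
      exact this
    obtain ⟨a, ha⟩ : ∃ a : Fin (m + 1) → R, f ⬝ᵥ a = x := by
      rw [Ideal.span, Submodule.mem_span_range_iff_exists_fun R] at hx
      obtain ⟨a, ha⟩ := hx
      exact ⟨a, by simpa [dotProduct, mul_comm] using ha⟩
    obtain ⟨b, hb⟩ : ∃ b : Fin (m + 1) → R, f ⬝ᵥ b = y := by
      rw [Ideal.span, Submodule.mem_span_range_iff_exists_fun R] at hy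
      obtain ⟨b, hb⟩ := hy
      exact ⟨b, by simpa [dotProduct, mul_comm] using hb⟩
    -- v ⬝ᵥ a ∈ (x)
    have hmem : v ⬝ᵥ a ∈ x • (⊤ : Submodule R R) := by
      have hxy : y * (v ⬝ᵥ a) = x * (v ⬝ᵥ b) := by rw [← ha, ← hb, key]
      have : y • (Submodule.Quotient.mk (v ⬝ᵥ a) : QuotSMulTop x R) = y • 0 := by
        rw [smul_zero, ← Submodule.Quotient.mk_smul, smul_eq_mul, hxy,
          Submodule.Quotient.mk_eq_zero]
        exact Submodule.smul_mem_pointwise_smul _ _ _ trivial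
      have := hyreg this
      rwa [Submodule.Quotient.mk_eq_zero] at this
    obtain ⟨c, -, hc⟩ := hmem
    simp only [DistribSMul.toLinearMap_apply, smul_eq_mul] at hc
    rw [Submodule.mem_span_singleton]
    refine ⟨c, funext fun i => ?_⟩
    have hi := key (Pi.single i 1) a
    rw [dotProduct_single, dotProduct_single, mul_one, mul_one, ha,
      ← hc] at hi
    -- hi : f i * (x * c) = x * v i
    have := hxreg (show x • (c * f i) = x • v i by
      rw [smul_eq_mul, smul_eq_mul]; linear_combination hi)
    simpa [Pi.smul_apply, smul_eq_mul] using this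
  · -- reverse inclusion
    rw [Submodule.span_le, Set.singleton_subset_iff]
    show f ∈ LinearMap.ker Mᵀ.mulVecLin
    rw [LinearMap.mem_ker]
    funext j
    have := hfM (Pi.single j 1)
    rw [Matrix.dotProduct_mulVec, dotProduct_single, mul_one] at this
    simpa [Matrix.mulVecLin, ← Matrix.mulVec_transpose] using this
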